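/- Under a sublinear expectation E with monotone continuity, a sequence X_n converging quasi-surely to X also converges in capacity: for all ε, δ > 0 there is N such that E(1_{|X_m - X| > ε}) < δ for all m ≥ N. Conversely, any sequence converging in capacity has a subsequence converging quasi-surely. -/

import Mathlib

open MeasureTheory Filter

variable {Ω : Type*} [MeasurableSpace Ω]

/-- The capacity `c(A) = sup_{θ∈Θ} θ(A)` associated with the sublinear
expectation `E(X) = sup_{θ∈Θ} E_θ[X]` (so `c(A) = E(1_A)`). -/
noncomputable def capa (Θ : Set (Measure Ω)) (A : Set Ω) : ℝ :=
  ⨆ θ : Θ, ((θ : Measure Ω) A).toReal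

lemma capa_nonneg (Θ : Set (Measure Ω)) (A : Set Ω) : 0 ≤ capa Θ A :=
  Real.iSup_nonneg fun _ => ENNReal.toReal_nonneg

lemma capa_bdd (Θ : Set (Measure Ω)) (hprob : ∀ θ ∈ Θ, IsProbabilityMeasure θ) (A : Set Ω) :
    BddAbove (Set.range fun θ : Θ => ((θ : Measure Ω) A).toReal) := by
  refine ⟨1, ?_⟩
  rintro x ⟨θ, rfl⟩
  haveI := hprob θ θ.2
  have h : (θ : Measure Ω) A ≤ 1 := prob_le_one
  calc ((θ : Measure Ω) A).toReal ≤ (1 : ENNReal).toReal := ENNReal.toReal_mono (by simp) h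
    _ = 1 := by simp

lemma le_capa (Θ : Set (Measure Ω)) (hprob : ∀ θ ∈ Θ, IsProbabilityMeasure θ)
    {θ : Measure Ω} (hθ : θ ∈ Θ) (A : Set Ω) : (θ A).toReal ≤ capa Θ A :=
  le_ciSup (capa_bdd Θ hprob A) ⟨θ, hθ⟩

theorem qs_convergence_and_capacity
    (Θ : Set (Measure Ω)) (hΘ : Θ.Nonempty)
    (hprob : ∀ θ ∈ Θ, IsProbabilityMeasure θ)
    (hmc : ∀ A : ℕ → Set Ω, (∀ n, A (n + 1) ⊆ A n) → (⋂ n, A n) = ∅ →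
      Tendsto (fun n => capa Θ (A n)) atTop (nhds 0))
    (X : ℕ → Ω → ℝ) (Xlim : Ω → ℝ) :
    ((∃ N : Set Ω, (∀ θ ∈ Θ, θ N = 0) ∧
        ∀ ω ∉ N, Tendsto (fun n => X n ω) atTop (nhds (Xlim ω))) →
      ∀ ε > (0 : ℝ), ∀ δ > (0 : ℝ), ∃ N₀ : ℕ, ∀ m ≥ N₀,
        capa Θ {ω | ε < |X m ω - Xlim ω|} < δ) ∧
    ((∀ ε > (0 : ℝ), ∀ δ > (0 : ℝ), ∃ N₀ : ℕ, ∀ m ≥ N₀,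
        capa Θ {ω | ε < |X m ω - Xlim ω|} < δ) →
      ∃ φ : ℕ → ℕ, StrictMono φ ∧
        ∃ N : Set Ω, (∀ θ ∈ Θ, θ N = 0) ∧
          ∀ ω ∉ N, Tendsto (fun k => X (φ k) ω) atTop (nhds (Xlim ω))) := by
  constructor
  · -- quasi-sure convergence implies convergence in capacity
    rintro ⟨N, hN0, hNconv⟩ ε hε δ hδ
    set A : ℕ → Set Ω := fun n => {ω | ω ∉ N ∧ ∃ k, n ≤ k ∧ ε < |X k ω - Xlim ω|} with hA
    have hAmono : ∀ n, A (n + 1) ⊆ A n := by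
      intro n ω ⟨hω1, k, hk1, hk2⟩
      exact ⟨hω1, k, le_trans (Nat.le_succ n) hk1, hk2⟩
    have hAempty : (⋂ n, A n) = ∅ := by
      ext ω
      simp only [Set.mem_iInter, Set.mem_empty_iff_false, iff_false]
      intro h
      obtain ⟨hωN, -⟩ := h 0
      obtain ⟨n₀, hn₀⟩ := (Metric.tendsto_atTop.mp (hNconv ω hωN)) ε hε
      obtain ⟨-, k, hk1, hk2⟩ := h n₀
      have := hn₀ k hk1
      rw [Real.dist_eq] at this
      linarith
    have htend := hmc A hAmono hAempty
    have hev : ∀ᶠ n in atTop, capa Θ (A n) < δ := htend.eventually (gt_mem_nhds hδ)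
    obtain ⟨N₀, hN₀⟩ := hev.exists_forall_of_atTop
    refine ⟨N₀, fun m hm => ?_⟩
    have key : ∀ θ ∈ Θ, (θ {ω | ε < |X m ω - Xlim ω|}).toReal ≤ capa Θ (A N₀) := by
      intro θ hθ
      haveI := hprob θ hθ
      have hsub : {ω | ε < |X m ω - Xlim ω|} \ N ⊆ A N₀ := by
        rintro ω ⟨hω1, hω2⟩
        exact ⟨hω2, m, hm, hω1⟩
      have h1 : θ {ω | ε < |X m ω - Xlim ω|} ≤ θ (A N₀) := by
        calc θ {ω | ε < |X m ω - Xlim ω|}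
            ≤ θ ({ω | ε < |X m ω - Xlim ω|} ∩ N) + θ ({ω | ε < |X m ω - Xlim ω|} \ N) :=
              measure_le_inter_add_diff θ _ N
          _ ≤ θ N + θ (A N₀) := add_le_add (measure_mono Set.inter_subset_right)
              (measure_mono hsub)
          _ = θ (A N₀) := by rw [hN0 θ hθ, zero_add]
      calc (θ {ω | ε < |X m ω - Xlim ω|}).toReal ≤ (θ (A N₀)).toReal :=
            ENNReal.toReal_mono (measure_ne_top θ _) h1
        _ ≤ capa Θ (A N₀) := le_capa Θ hprob hθ _
    calc capa Θ {ω | ε < |X m ω - Xlim ω|} ≤ capa Θ (A N₀) := by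
          apply Real.iSup_le _ (capa_nonneg Θ _)
          rintro ⟨θ, hθ⟩
          exact key θ hθ
      _ < δ := hN₀ N₀ le_rfl
  · -- convergence in capacity gives a quasi-surely convergent subsequence
    intro hcap
    choose g hg using fun k : ℕ =>
      hcap ((1/2 : ℝ) ^ k) (by positivity) ((1/2 : ℝ) ^ k) (by positivity)
    set φ : ℕ → ℕ := fun k => Nat.rec (g 0) (fun k ih => max (g (k + 1)) (ih + 1)) k with hφ
    have hφsucc : ∀ k, φ (k + 1) = max (g (k + 1)) (φ k + 1) := fun k => rfl
    have hφmono : StrictMono φ := by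
      apply strictMono_nat_of_lt_succ
      intro k
      rw [hφsucc k]
      exact lt_of_lt_of_le (Nat.lt_succ_self _) (le_max_right _ _)
    have hφge : ∀ k, g k ≤ φ k := by
      intro k
      cases k with
      | zero => exact le_rfl
      | succ k => rw [hφsucc k]; exact le_max_left _ _
    set A : ℕ → Set Ω := fun k => {ω | (1/2 : ℝ) ^ k < |X (φ k) ω - Xlim ω|} with hAdef
    have hAcap : ∀ k, capa Θ (A k) < (1/2 : ℝ) ^ k := fun k => hg k (φ k) (hφge k)
    set N : Set Ω := ⋂ n, ⋃ j, A (n + j) with hNdef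
    refine ⟨φ, hφmono, N, ?_, ?_⟩
    · intro θ hθ
      haveI := hprob θ hθ
      have hbound : ∀ k, θ (A k) ≤ ENNReal.ofReal ((1/2 : ℝ) ^ k) := by
        intro k
        rw [← ENNReal.ofReal_toReal (measure_ne_top θ (A k))]
        exact ENNReal.ofReal_le_ofReal
          (le_of_lt (lt_of_le_of_lt (le_capa Θ hprob hθ _) (hAcap k)))
      have hsummable : ∀ n : ℕ, Summable (fun j : ℕ => (1/2 : ℝ) ^ (n + j)) := by
        intro n
        simpa [pow_add] using (summable_geometric_two).mul_left ((1/2 : ℝ) ^ n)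
      have hNle : ∀ n : ℕ, θ N ≤ ENNReal.ofReal ((1/2 : ℝ) ^ n * 2) := by
        intro n
        have h1 : θ N ≤ θ (⋃ j, A (n + j)) := measure_mono (Set.iInter_subset _ n)
        have h2 : θ (⋃ j, A (n + j)) ≤ ∑' j, θ (A (n + j)) := measure_iUnion_le _
        have h3 : ∑' j : ℕ, θ (A (n + j)) ≤ ∑' j : ℕ, ENNReal.ofReal ((1/2 : ℝ) ^ (n + j)) :=
          ENNReal.tsum_le_tsum fun j => hbound (n + j)
        have h4 : ∑' j : ℕ, ENNReal.ofReal ((1/2 : ℝ) ^ (n + j))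
            = ENNReal.ofReal (∑' j : ℕ, (1/2 : ℝ) ^ (n + j)) :=
          (ENNReal.ofReal_tsum_of_nonneg (fun j => by positivity) (hsummable n)).symm
        have h5 : ∑' j : ℕ, (1/2 : ℝ) ^ (n + j) = (1/2 : ℝ) ^ n * 2 := by
          simp only [pow_add]
          rw [tsum_mul_left, tsum_geometric_two]
        calc θ N ≤ ∑' j : ℕ, θ (A (n + j)) := le_trans h1 h2
          _ ≤ ENNReal.ofReal ((1/2 : ℝ) ^ n * 2) := by rw [← h5, ← h4]; exact h3
      have htend0 : Tendsto (fun n : ℕ => ENNReal.ofReal ((1/2 : ℝ) ^ n * 2)) atTop (nhds 0) := by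
        have : Tendsto (fun n : ℕ => (1/2 : ℝ) ^ n * 2) atTop (nhds 0) := by
          simpa using (tendsto_pow_atTop_nhds_zero_of_lt_one (by norm_num) (by norm_num)
            : Tendsto (fun n : ℕ => (1/2 : ℝ) ^ n) atTop (nhds 0)).mul_const (2 : ℝ)
        simpa using (ENNReal.tendsto_ofReal this)
      have := ge_of_tendsto' htend0 hNle
      exact le_antisymm this zero_le
    · intro ω hω
      rw [hNdef] at hω
      simp only [Set.mem_iInter, Set.mem_iUnion, not_forall, not_exists] at hω
      obtain ⟨n, hn⟩ := hω
      have hbd : ∀ k ≥ n, |X (φ k) ω - Xlim ω| ≤ (1/2 : ℝ) ^ k := by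
        intro k hk
        obtain ⟨j, rfl⟩ := Nat.exists_eq_add_of_le hk
        have := hn j
        rw [hAdef] at this
        simp only [Set.mem_setOf_eq, not_lt] at this
        exact this
      have habs : Tendsto (fun k => |X (φ k) ω - Xlim ω|) atTop (nhds 0) := by
        apply squeeze_zero' (Eventually.of_forall fun k => abs_nonneg _)
          (eventually_atTop.mpr ⟨n, hbd⟩)
        exact tendsto_pow_atTop_nhds_zero_of_lt_one (by norm_num) (by norm_num)
      rw [tendsto_iff_dist_tendsto_zero]
      simpa [Real.dist_eq] using habs
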